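/- For all x, y, l ∈ ℕ, ⌊m(x, y) / 4^l⌋ = m(⌊x / 2^l⌋, ⌊y / 2^l⌋) (integer division). Consequently, for all x1, y1, x2, y2, l ∈ ℕ: ⌊m(x1, y1) / 4^l⌋ = ⌊m(x2, y2) / 4^l⌋ if and only if ⌊x1 / 2^l⌋ = ⌊x2 / 2^l⌋ and ⌊y1 / 2^l⌋ = ⌊y2 / 2^l⌋. That is, two grid points lie in the same quadtree cell obtained after discarding l levels of resolution exactly when their Z-orders share the corresponding high-order prefix; hence the identifiers of spatial objects assigned within one quadtree node occupy a contiguous range in the Z-order identifier space (the I-Range property). -/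

import Mathlib

/-- The `i`-th binary digit of `n` (an element of `{0, 1}`). -/
def bit (n i : ℕ) : ℕ := n / 2 ^ i % 2

/-- The Morton (Z-order) interleaving function
`m(x, y) = Σ_i (bit_i(x) + 2 · bit_i(y)) · 4 ^ i`:
the `(2i)`-th binary digit of `m(x, y)` is the `i`-th binary digit of `x` and
the `(2i+1)`-th binary digit of `m(x, y)` is the `i`-th binary digit of `y`.
(All binary digits of `x` and of `y` in positions `≥ x + y + 1` vanish, so the
finite sum below realizes the full interleaving.) -/
def morton (x y : ℕ) : ℕ :=
  ∑ i ∈ Finset.range (x + y + 1), (bit x i + 2 * bit y i) * 4 ^ i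

lemma bit_eq_zero {a i : ℕ} (h : a ≤ i) : bit a i = 0 := by
  unfold bit
  have : a < 2 ^ i := lt_of_le_of_lt h (Nat.lt_two_pow_self (n := i))
  simp [Nat.div_eq_of_lt this]

lemma morton_sum (a b n : ℕ) (hn : a + b + 1 ≤ n) :
    ∑ i ∈ Finset.range n, (bit a i + 2 * bit b i) * 4 ^ i = morton a b := by
  unfold morton
  refine (Finset.sum_subset ?_ ?_).symm
  · exact Finset.range_subset_range.mpr hn
  · intro i _ hi
    simp only [Finset.mem_range, not_lt] at hi
    rw [bit_eq_zero (by omega), bit_eq_zero (by omega)]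
    ring

lemma bit_succ (a i : ℕ) : bit a (i + 1) = bit (a / 2) i := by
  unfold bit
  rw [pow_succ, Nat.mul_comm, ← Nat.div_div_eq_div_mul]

lemma morton_rec (x y : ℕ) :
    morton x y = x % 2 + 2 * (y % 2) + 4 * morton (x / 2) (y / 2) := by
  rcases Nat.eq_zero_or_pos (x + y) with h | h
  · have hx : x = 0 := by omega
    have hy : y = 0 := by omega
    subst hx; subst hy
    simp [morton, bit]
  · have h1 : morton x y =
        ∑ i ∈ Finset.range (x + y + 1), (bit x i + 2 * bit y i) * 4 ^ i := rfl
    rw [h1, Finset.sum_range_succ']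
    have h2 : ∀ i, (bit x (i + 1) + 2 * bit y (i + 1)) * 4 ^ (i + 1)
        = 4 * ((bit (x / 2) i + 2 * bit (y / 2) i) * 4 ^ i) := by
      intro i
      rw [bit_succ, bit_succ, pow_succ]
      ring
    simp only [h2]
    rw [← Finset.mul_sum, morton_sum (x / 2) (y / 2) (x + y) (by omega)]
    have hb0 : ∀ a : ℕ, bit a 0 = a % 2 := by intro a; simp [bit]
    rw [hb0, hb0]
    ring

lemma morton_div4 (x y : ℕ) : morton x y / 4 = morton (x / 2) (y / 2) := by
  rw [morton_rec x y]
  omega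

lemma morton_mod4 (x y : ℕ) : morton x y % 4 = x % 2 + 2 * (y % 2) := by
  rw [morton_rec x y]
  omega

lemma morton_div_pow (x y l : ℕ) :
    morton x y / 4 ^ l = morton (x / 2 ^ l) (y / 2 ^ l) := by
  induction l with
  | zero => simp
  | succ l ih =>
      rw [pow_succ, ← Nat.div_div_eq_div_mul, ih, morton_div4,
        Nat.div_div_eq_div_mul, Nat.div_div_eq_div_mul, ← pow_succ]

lemma morton_inj_aux : ∀ n x1 y1 x2 y2 : ℕ, x1 + y1 + x2 + y2 = n →
    morton x1 y1 = morton x2 y2 → x1 = x2 ∧ y1 = y2 := by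
  intro n
  induction n using Nat.strong_induction_on with
  | _ n ih =>
    intro x1 y1 x2 y2 hn h
    rcases Nat.eq_zero_or_pos n with h0 | h0
    · omega
    · have hmod := morton_mod4 x1 y1
      rw [h, morton_mod4] at hmod
      have hdiv : morton (x1 / 2) (y1 / 2) = morton (x2 / 2) (y2 / 2) := by
        rw [← morton_div4, ← morton_div4, h]
      have := ih (x1 / 2 + y1 / 2 + x2 / 2 + y2 / 2) (by omega)
        (x1 / 2) (y1 / 2) (x2 / 2) (y2 / 2) rfl hdiv
      omega

lemma morton_inj {x1 y1 x2 y2 : ℕ} (h : morton x1 y1 = morton x2 y2) :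
    x1 = x2 ∧ y1 = y2 := morton_inj_aux _ x1 y1 x2 y2 rfl h

theorem morton_prefix_property :
    (∀ x y l : ℕ, morton x y / 4 ^ l = morton (x / 2 ^ l) (y / 2 ^ l)) ∧
    (∀ x1 y1 x2 y2 l : ℕ,
      morton x1 y1 / 4 ^ l = morton x2 y2 / 4 ^ l ↔
        x1 / 2 ^ l = x2 / 2 ^ l ∧ y1 / 2 ^ l = y2 / 2 ^ l) := by
  refine ⟨morton_div_pow, fun x1 y1 x2 y2 l => ?_⟩
  rw [morton_div_pow, morton_div_pow]
  exact ⟨morton_inj, fun ⟨h1, h2⟩ => by rw [h1, h2]⟩
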